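/- arXiv:2408.05199 — 2 statements merged into one kernel-verified Lean document; each statement's English description precedes it below -/
import Mathlib

section
/- The ideal Λ = Λ₀ + Λ₁ + Λ₂ is contained in I(X), the defining ideal of the special fiber ring F(I); that is, every generator of Λ lies in the kernel of φ_W. -/
open MvPolynomial

/-! Setup following "Rees algebras of ideals submaximally generated by quadrics".
`R = K[x_1, …, x_d]`, `I = (x_i x_j (i ≠ j), x_k^2 - x_d^2 (k ≠ d))`,
`W = K[w_{ij} : 1 ≤ i ≤ j ≤ d, (i,j) ≠ (d,d)]` with `w_{ij} = w_{ji}`, `w_{dd} = 0`,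
`φ_W : W → R`, `w_{ij} ↦ g_{ij}`, `I(X) = ker φ_W`, and the candidate ideal
`Λ = Λ₀ + Λ₁ + Λ₂` built from 2×2 minors of the symmetric matrix `M = (w_{ij})`. -/

/-- 1-based index set `{1, …, d}`. -/
abbrev Idx (d : ℕ) : Type := (Set.Icc 1 d : Set ℕ)

/-- Index set for the variables `w_{ij}`, `1 ≤ i ≤ j ≤ d`, `(i,j) ≠ (d,d)`. -/
abbrev SymIdx (d : ℕ) : Type :=
  {p : Idx d × Idx d // p.1 ≤ p.2 ∧ ¬(p.1.1 = d ∧ p.2.1 = d)}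

/-- The entry `w_{ij}` of `M` as an element of `W`, with the conventions
`w_{ij} = w_{ji}` and `w_{dd} = 0`. -/
noncomputable def wv (K : Type*) [Field K] (d : ℕ) (i j : Idx d) :
    MvPolynomial (SymIdx d) K :=
  if h : (min i j).1 = d ∧ (max i j).1 = d then 0
  else X (⟨(min i j, max i j), ⟨min_le_max, h⟩⟩ : SymIdx d)

/-- The last variable `x_d` of `R = K[x_1, …, x_d]`. -/
noncomputable def xd (K : Type*) [Field K] (d : ℕ) : MvPolynomial (Idx d) K :=
  if h : 1 ≤ d then X (⟨d, Set.mem_Icc.mpr ⟨h, le_rfl⟩⟩ : Idx d) else 0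

/-- The quadrics `g_{ij} = x_i x_j` (for `i ≠ j`) and `g_{ii} = x_i ^ 2 - x_d ^ 2`. -/
noncomputable def gq (K : Type*) [Field K] (d : ℕ) (i j : Idx d) : MvPolynomial (Idx d) K :=
  if i = j then X i ^ 2 - xd K d ^ 2 else X i * X j

/-- The `K`-algebra map `φ_W : W → R`, `w_{ij} ↦ g_{ij}`. -/
noncomputable def phiW (K : Type*) [Field K] (d : ℕ) :
    MvPolynomial (SymIdx d) K →ₐ[K] MvPolynomial (Idx d) K :=
  aeval (fun p : SymIdx d => gq K d p.1.1 p.1.2)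

/-- `I(X) = ker φ_W`, the defining ideal of the special fiber ring `F(I)`. -/
noncomputable def IX (K : Type*) [Field K] (d : ℕ) : Ideal (MvPolynomial (SymIdx d) K) :=
  RingHom.ker (phiW K d).toRingHom

/-- A `2 × 2` submatrix of the symmetric matrix `M = (w_{ij})`, recorded by its (ordered)
rows `r1 < r2` and columns `c1 < c2`. -/
structure Sub2 (d : ℕ) where
  r1 : Idx d
  r2 : Idx d
  c1 : Idx d
  c2 : Idx d
  hr : r1 < r2
  hc : c1 < c2

/-- The determinant of a `2 × 2` submatrix of `M`, i.e. the minor `[r1 r2 | c1 c2]`. -/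
noncomputable def sdet (K : Type*) [Field K] (d : ℕ) (m : Sub2 d) :
    MvPolynomial (SymIdx d) K :=
  wv K d m.r1 m.c1 * wv K d m.r2 m.c2 - wv K d m.r1 m.c2 * wv K d m.r2 m.c1

/-- The set of row indices of a `2 × 2` submatrix. -/
def Sub2.rows {d : ℕ} (m : Sub2 d) : Finset (Idx d) := {m.r1, m.r2}

/-- The set of column indices of a `2 × 2` submatrix. -/
def Sub2.cols {d : ℕ} (m : Sub2 d) : Finset (Idx d) := {m.c1, m.c2}

/-- `inA s m` says that the minor `det m` belongs to `A_s`: the row and column index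
sets of `m` meet in exactly `s` indices (equivalently, `m` contains exactly `s`
diagonal entries of `M`). -/
def inA {d : ℕ} (s : ℕ) (m : Sub2 d) : Prop := (m.rows ∩ m.cols).card = s

/-- Two `2 × 2` submatrices of `M` are complementary: there is a `4 × 4` principal
submatrix (with index set `S`, `|S| = 4`) containing both, in which they share no rows
and no columns. -/
def ComplSub2 {d : ℕ} (m n : Sub2 d) : Prop :=
  ∃ S : Finset (Idx d), S.card = 4 ∧ m.rows ∪ n.rows ⊆ S ∧ m.cols ∪ n.cols ⊆ S ∧
    Disjoint m.rows n.rows ∧ Disjoint m.cols n.cols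

/-- `δ(m) = 0` if the diagonal entry of `M` appearing in `m` lies on the diagonal of `m`,
and `δ(m) = 1` if it lies on the antidiagonal (intended for minors in `A₁`). -/
def delta {d : ℕ} (m : Sub2 d) : ℕ := if m.r1 = m.c1 ∨ m.r2 = m.c2 then 0 else 1

/-- `Λ₀`: the ideal generated by the minors in `A₀`. -/
noncomputable def Lam0 (K : Type*) [Field K] (d : ℕ) : Ideal (MvPolynomial (SymIdx d) K) :=
  Ideal.span {f | ∃ m : Sub2 d, inA 0 m ∧ f = sdet K d m}

/-- `Λ₁`: generated by `det m - (-1)^(δ m + δ n) * det n` over complementary pairs in `A₁`. -/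
noncomputable def Lam1 (K : Type*) [Field K] (d : ℕ) : Ideal (MvPolynomial (SymIdx d) K) :=
  Ideal.span {f | ∃ m n : Sub2 d, inA 1 m ∧ inA 1 n ∧ ComplSub2 m n ∧
    f = sdet K d m - (-1 : MvPolynomial (SymIdx d) K) ^ (delta m + delta n) * sdet K d n}

/-- `Λ₂`: generated by `(det m1 + det n1) - (det m2 + det n2)` over pairs of complementary
matrices (PCMs), all four lying in a common `4 × 4` principal submatrix. -/
noncomputable def Lam2 (K : Type*) [Field K] (d : ℕ) : Ideal (MvPolynomial (SymIdx d) K) :=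
  Ideal.span {f | ∃ m1 n1 m2 n2 : Sub2 d, inA 2 m1 ∧ inA 2 n1 ∧ inA 2 m2 ∧ inA 2 n2 ∧
    ComplSub2 m1 n1 ∧ ComplSub2 m2 n2 ∧
    (∃ S : Finset (Idx d), S.card = 4 ∧
      m1.rows ∪ m1.cols ∪ n1.rows ∪ n1.cols ∪ m2.rows ∪ m2.cols ∪ n2.rows ∪ n2.cols ⊆ S) ∧
    f = (sdet K d m1 + sdet K d n1) - (sdet K d m2 + sdet K d n2)}

/-- The candidate ideal `Λ = Λ₀ + Λ₁ + Λ₂`. -/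
noncomputable def Lam (K : Type*) [Field K] (d : ℕ) : Ideal (MvPolynomial (SymIdx d) K) :=
  Lam0 K d + Lam1 K d + Lam2 K d

/-- The Hilbert function of an ideal `N ⊆ W` in degree `i`:
the `K`-dimension of the degree-`i` homogeneous component of `N`. -/
noncomputable def HFI (K : Type*) [Field K] (d : ℕ)
    (N : Ideal (MvPolynomial (SymIdx d) K)) (i : ℕ) : ℕ :=
  Module.finrank K
    ↥(Submodule.restrictScalars K N ⊓ homogeneousSubmodule (SymIdx d) K i)


lemma phi_wv (K : Type*) [Field K] (d : ℕ) (i j : Idx d) :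
    phiW K d (wv K d i j) = X i * X j - (if i = j then xd K d ^ 2 else 0) := by
  have h1 : 1 ≤ d := le_trans (Set.mem_Icc.mp i.2).1 (Set.mem_Icc.mp i.2).2
  have hxd : xd K d = X (⟨d, Set.mem_Icc.mpr ⟨h1, le_rfl⟩⟩ : Idx d) := by
    unfold xd; rw [dif_pos h1]
  unfold wv
  by_cases h : (min i j).1 = d ∧ (max i j).1 = d
  · rw [dif_pos h]
    have hmi : ((min i j : Idx d) : ℕ) ≤ i.1 := Subtype.coe_le_coe.mpr (min_le_left i j)
    have hmj : ((min i j : Idx d) : ℕ) ≤ j.1 := Subtype.coe_le_coe.mpr (min_le_right i j)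
    have hbi := (Set.mem_Icc.mp i.2).2
    have hbj := (Set.mem_Icc.mp j.2).2
    have h1' := h.1
    have hi : i.1 = d := by omega
    have hj : j.1 = d := by omega
    have hij : i = j := Subtype.ext (hi.trans hj.symm)
    have hxi : xd K d = X i := by rw [hxd]; congr 1; exact Subtype.ext hi.symm
    rw [map_zero, if_pos hij, hxi, hij]; ring
  · rw [dif_neg h]
    simp only [phiW, aeval_X]
    rcases le_total i j with hle | hle
    · rw [min_eq_left hle, max_eq_right hle]
      by_cases hij : i = j
      · simp [gq, hij]; ring
      · simp [gq, hij]
    · rw [min_eq_right hle, max_eq_left hle]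
      by_cases hij : i = j
      · simp [gq, hij]; ring
      · simp [gq, hij, Ne.symm hij, mul_comm]

lemma phi_sdet (K : Type*) [Field K] (d : ℕ) (m : Sub2 d) :
    phiW K d (sdet K d m) =
      (X m.r1 * X m.c1 - (if m.r1 = m.c1 then xd K d ^ 2 else 0)) *
      (X m.r2 * X m.c2 - (if m.r2 = m.c2 then xd K d ^ 2 else 0)) -
      (X m.r1 * X m.c2 - (if m.r1 = m.c2 then xd K d ^ 2 else 0)) *
      (X m.r2 * X m.c1 - (if m.r2 = m.c1 then xd K d ^ 2 else 0)) := by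
  simp only [sdet, map_sub, map_mul, phi_wv]

lemma rows_card {d : ℕ} (m : Sub2 d) : m.rows.card = 2 :=
  Finset.card_pair (ne_of_lt m.hr)

lemma cols_card {d : ℕ} (m : Sub2 d) : m.cols.card = 2 :=
  Finset.card_pair (ne_of_lt m.hc)

lemma inA0_ne {d : ℕ} (m : Sub2 d) (h : inA 0 m) :
    m.r1 ≠ m.c1 ∧ m.r1 ≠ m.c2 ∧ m.r2 ≠ m.c1 ∧ m.r2 ≠ m.c2 := by
  have h0 : m.rows ∩ m.cols = ∅ := Finset.card_eq_zero.mp h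
  rw [Finset.eq_empty_iff_forall_notMem] at h0
  simp only [Sub2.rows, Sub2.cols, Finset.mem_inter, Finset.mem_insert,
    Finset.mem_singleton] at h0
  exact ⟨fun he => h0 m.r1 ⟨Or.inl rfl, Or.inl he⟩,
    fun he => h0 m.r1 ⟨Or.inl rfl, Or.inr he⟩,
    fun he => h0 m.r2 ⟨Or.inr rfl, Or.inl he⟩,
    fun he => h0 m.r2 ⟨Or.inr rfl, Or.inr he⟩⟩

lemma inA2_eq {d : ℕ} (m : Sub2 d) (h : inA 2 m) : m.r1 = m.c1 ∧ m.r2 = m.c2 := by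
  have hsub : m.rows ∩ m.cols ⊆ m.rows := Finset.inter_subset_left
  have heq : m.rows ∩ m.cols = m.rows :=
    Finset.eq_of_subset_of_card_le hsub (by rw [h, rows_card])
  have hrows : m.rows ⊆ m.cols := by
    rw [← heq]; exact Finset.inter_subset_right
  have hr1 : m.r1 = m.c1 ∨ m.r1 = m.c2 := by
    have := hrows (by simp [Sub2.rows] : m.r1 ∈ m.rows)
    simpa [Sub2.cols] using this
  have hr2 : m.r2 = m.c1 ∨ m.r2 = m.c2 := by
    have := hrows (by simp [Sub2.rows] : m.r2 ∈ m.rows)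
    simpa [Sub2.cols] using this
  rcases hr1 with e1 | e1
  · rcases hr2 with e2 | e2
    · exact absurd (e1.trans e2.symm) (ne_of_lt m.hr)
    · exact ⟨e1, e2⟩
  · rcases hr2 with e2 | e2
    · exact absurd (lt_trans (e2 ▸ m.hc) (e1 ▸ m.hr)) (lt_irrefl _)
    · exact absurd (e1.trans e2.symm) (ne_of_lt m.hr)

lemma inA1_struct (K : Type*) [Field K] (d : ℕ) (m : Sub2 d) (h : inA 1 m) :
    ∃ p q : Idx d,
      (p = m.r1 ∨ p = m.r2) ∧ p ≠ m.c1 ∧ p ≠ m.c2 ∧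
      (q = m.c1 ∨ q = m.c2) ∧ q ≠ m.r1 ∧ q ≠ m.r2 ∧
      (∀ x : Idx d, (x = m.r1 ∨ x = m.r2) → x ≠ m.c1 → x ≠ m.c2 → x = p) ∧
      (∀ x : Idx d, (x = m.c1 ∨ x = m.c2) → x ≠ m.r1 → x ≠ m.r2 → x = q) ∧
      phiW K d (sdet K d m) =
        (-1 : MvPolynomial (Idx d) K) ^ delta m * -(xd K d ^ 2 * (X p * X q)) := by
  obtain ⟨i, hi⟩ := Finset.card_eq_one.mp h
  have hmem : ∀ x : Idx d, ((x = m.r1 ∨ x = m.r2) ∧ (x = m.c1 ∨ x = m.c2)) ↔ x = i := by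
    intro x
    rw [show ((x = m.r1 ∨ x = m.r2) ∧ (x = m.c1 ∨ x = m.c2)) ↔
        (x ∈ m.rows ∧ x ∈ m.cols) by
      simp [Sub2.rows, Sub2.cols]]
    rw [← Finset.mem_inter, hi, Finset.mem_singleton]
  have hii := (hmem i).mpr rfl
  have hner : m.r1 ≠ m.r2 := ne_of_lt m.hr
  have hnec : m.c1 ≠ m.c2 := ne_of_lt m.hc
  rcases hii.1 with hir | hir <;> rcases hii.2 with hic | hic
  · -- i = r1 = c1
    have hrc : m.r1 = m.c1 := hir.symm.trans hic
    have h12 : m.r1 ≠ m.c2 := fun e => hnec (hrc.symm.trans e)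
    have h21 : m.r2 ≠ m.c1 := fun e => hner (hrc.trans e.symm)
    have h22 : m.r2 ≠ m.c2 := fun e =>
      hner (((hmem m.r2).mp ⟨Or.inr rfl, Or.inr e⟩).trans hir).symm
    refine ⟨m.r2, m.c2, Or.inr rfl, h21, h22, Or.inr rfl, Ne.symm h12, Ne.symm h22,
      fun x hx h1 _ => hx.resolve_left (fun e => h1 (e.trans hrc)),
      fun x hx h1 _ => hx.resolve_left (fun e => h1 (e.trans hrc.symm)), ?_⟩
    rw [phi_sdet, if_pos hrc, if_neg h22, if_neg h12, if_neg h21, delta,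
      if_pos (Or.inl hrc)]
    ring
  · -- i = r1 = c2
    have hrc : m.r1 = m.c2 := hir.symm.trans hic
    have h11 : m.r1 ≠ m.c1 := fun e => hnec (e.symm.trans hrc)
    have h22 : m.r2 ≠ m.c2 := fun e => hner (hrc.trans e.symm)
    have h21 : m.r2 ≠ m.c1 := fun e =>
      hner (((hmem m.r2).mp ⟨Or.inr rfl, Or.inl e⟩).trans hir).symm
    refine ⟨m.r2, m.c1, Or.inr rfl, h21, h22, Or.inl rfl, Ne.symm h11, Ne.symm h21,
      fun x hx _ h2 => hx.resolve_left (fun e => h2 (e.trans hrc)),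
      fun x hx h1 _ => hx.resolve_right (fun e => h1 (e.trans hrc.symm)), ?_⟩
    rw [phi_sdet, if_neg h11, if_neg h22, if_pos hrc, if_neg h21, delta,
      if_neg (by rintro (e | e); exacts [h11 e, h22 e])]
    ring
  · -- i = r2 = c1
    have hrc : m.r2 = m.c1 := hir.symm.trans hic
    have h11 : m.r1 ≠ m.c1 := fun e => hner (e.trans hrc.symm)
    have h12 : m.r1 ≠ m.c2 := fun e =>
      hner (((hmem m.r1).mp ⟨Or.inl rfl, Or.inr e⟩).trans hir)
    have h22 : m.r2 ≠ m.c2 := fun e => hnec (hrc.symm.trans e)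
    refine ⟨m.r1, m.c2, Or.inl rfl, h11, h12, Or.inr rfl, Ne.symm h12, Ne.symm h22,
      fun x hx h1 _ => hx.resolve_right (fun e => h1 (e.trans hrc)),
      fun x hx _ h2 => hx.resolve_left (fun e => h2 (e.trans hrc.symm)), ?_⟩
    rw [phi_sdet, if_neg h11, if_neg h22, if_neg h12, if_pos hrc, delta,
      if_neg (by rintro (e | e); exacts [h11 e, h22 e])]
    ring
  · -- i = r2 = c2
    have hrc : m.r2 = m.c2 := hir.symm.trans hic
    have h11 : m.r1 ≠ m.c1 := fun e =>
      hner (((hmem m.r1).mp ⟨Or.inl rfl, Or.inl e⟩).trans hir)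
    have h12 : m.r1 ≠ m.c2 := fun e => hner (e.trans hrc.symm)
    have h21 : m.r2 ≠ m.c1 := fun e => hnec (e.symm.trans hrc)
    refine ⟨m.r1, m.c1, Or.inl rfl, h11, h12, Or.inl rfl, Ne.symm h11, Ne.symm h21,
      fun x hx _ h2 => hx.resolve_right (fun e => h2 (e.trans hrc)),
      fun x hx _ h2 => hx.resolve_right (fun e => h2 (e.trans hrc.symm)), ?_⟩
    rw [phi_sdet, if_neg h11, if_pos hrc, if_neg h12, if_neg h21, delta,
      if_pos (Or.inr hrc)]
    ring

lemma phi_sdet_A2 (K : Type*) [Field K] (d : ℕ) (m : Sub2 d) (h : inA 2 m) :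
    phiW K d (sdet K d m) =
      xd K d ^ 2 * xd K d ^ 2 - xd K d ^ 2 * ∑ i ∈ m.rows, X i ^ 2 := by
  obtain ⟨h1, h2⟩ := inA2_eq m h
  have h12 : m.r1 ≠ m.c2 := fun e => ne_of_lt m.hr (e.trans h2.symm)
  have h21 : m.r2 ≠ m.c1 := fun e => ne_of_lt m.hr (h1.trans e.symm)
  rw [phi_sdet, if_pos h1, if_pos h2, if_neg h12, if_neg h21, Sub2.rows,
    Finset.sum_pair (ne_of_lt m.hr), ← h1, ← h2]
  ring

lemma union_eq_of_card {d : ℕ} (S a b : Finset (Idx d)) (hS : S.card = 4)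
    (ha : a.card = 2) (hb : b.card = 2) (hsub : a ∪ b ⊆ S) (hdisj : Disjoint a b) :
    a ∪ b = S :=
  Finset.eq_of_subset_of_card_le hsub
    (by rw [Finset.card_union_of_disjoint hdisj, ha, hb, hS])

/-- `Λ = Λ₀ + Λ₁ + Λ₂` is contained in `I(X) = ker φ_W`. -/
theorem candidate_le_fiber_ideal (K : Type*) [Field K] [CharZero K] (d : ℕ) (hd : 4 ≤ d) :
    Lam K d ≤ IX K d := by
  have hker : ∀ f : MvPolynomial (SymIdx d) K, phiW K d f = 0 → f ∈ IX K d := by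
    intro f hf
    rw [IX, RingHom.mem_ker]
    exact hf
  rw [Lam, Submodule.add_eq_sup, Submodule.add_eq_sup]
  refine sup_le (sup_le ?_ ?_) ?_
  · -- Λ₀
    rw [Lam0, Ideal.span_le]
    rintro f ⟨m, hm, rfl⟩
    obtain ⟨h11, h12, h21, h22⟩ := inA0_ne m hm
    apply hker
    rw [phi_sdet, if_neg h11, if_neg h22, if_neg h12, if_neg h21]
    ring
  · -- Λ₁
    rw [Lam1, Ideal.span_le]
    rintro f ⟨m, n, hm, hn, ⟨S, hS4, hrS, hcS, hdr, hdc⟩, rfl⟩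
    obtain ⟨p, q, hpav, hp1, hp2, hqav, hq1, hq2, huR, -, hphim⟩ := inA1_struct K d m hm
    obtain ⟨p', q', hpav', hp1', hp2', hqav', hq1', hq2', huR', -, hphin⟩ := inA1_struct K d n hn
    -- rows m ∪ rows n = S
    have hRS : m.rows ∪ n.rows = S :=
      union_eq_of_card S _ _ hS4 (rows_card m) (rows_card n) hrS hdr
    -- q = p'
    have hqcm : q ∈ m.cols := by
      simp only [Sub2.cols, Finset.mem_insert, Finset.mem_singleton]; exact hqav
    have hqS : q ∈ S := hcS (Finset.mem_union_left _ hqcm)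
    have hqrn : q ∈ n.rows := by
      rw [← hRS] at hqS
      rcases Finset.mem_union.mp hqS with hq | hq
      · exfalso
        simp only [Sub2.rows, Finset.mem_insert, Finset.mem_singleton] at hq
        rcases hq with e | e
        exacts [hq1 e, hq2 e]
      · exact hq
    have hqrn' : q = n.r1 ∨ q = n.r2 := by
      simpa [Sub2.rows] using hqrn
    have hqncn : q ∉ n.cols := Finset.disjoint_left.mp hdc hqcm
    have hqnc : q ≠ n.c1 ∧ q ≠ n.c2 := by
      constructor <;> intro e <;> apply hqncn <;>
        simp [Sub2.cols, e]
    have heq1 : q = p' := huR' q hqrn' hqnc.1 hqnc.2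
    -- q' = p
    have hqcn' : q' ∈ n.cols := by
      simp only [Sub2.cols, Finset.mem_insert, Finset.mem_singleton]; exact hqav'
    have hq'S : q' ∈ S := hcS (Finset.mem_union_right _ hqcn')
    have hq'rm : q' ∈ m.rows := by
      rw [← hRS] at hq'S
      rcases Finset.mem_union.mp hq'S with hq | hq
      · exact hq
      · exfalso
        simp only [Sub2.rows, Finset.mem_insert, Finset.mem_singleton] at hq
        rcases hq with e | e
        exacts [hq1' e, hq2' e]
    have hq'rm' : q' = m.r1 ∨ q' = m.r2 := by
      simpa [Sub2.rows] using hq'rm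
    have hq'ncm : q' ∉ m.cols := Finset.disjoint_left.mp hdc.symm hqcn'
    have hq'nc : q' ≠ m.c1 ∧ q' ≠ m.c2 := by
      constructor <;> intro e <;> apply hq'ncm <;>
        simp [Sub2.cols, e]
    have heq2 : q' = p := huR q' hq'rm' hq'nc.1 hq'nc.2
    apply hker
    rw [map_sub, map_mul, map_pow, map_neg, map_one, hphim, hphin, ← heq1, ← heq2]
    have hb : (-1 : MvPolynomial (Idx d) K) ^ delta n * (-1 : MvPolynomial (Idx d) K) ^ delta n = 1 := by
      rw [← pow_add, ← two_mul, pow_mul, neg_one_sq, one_pow]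
    rw [pow_add]
    linear_combination ((-1 : MvPolynomial (Idx d) K) ^ delta m * xd K d ^ 2 * X q' * X q) * hb
  · -- Λ₂
    rw [Lam2, Ideal.span_le]
    rintro f ⟨m1, n1, m2, n2, h1, h2, h3, h4, ⟨S1, hS1, hr1, hc1, hd1r, hd1c⟩,
      ⟨S2, hS2, hr2, hc2, hd2r, hd2c⟩, ⟨S, hS, hsub⟩, rfl⟩
    have hm1 : m1.rows ⊆ S := fun x hx => hsub (by simp [Finset.mem_union, hx])
    have hn1 : n1.rows ⊆ S := fun x hx => hsub (by simp [Finset.mem_union, hx])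
    have hm2 : m2.rows ⊆ S := fun x hx => hsub (by simp [Finset.mem_union, hx])
    have hn2 : n2.rows ⊆ S := fun x hx => hsub (by simp [Finset.mem_union, hx])
    have hU1 : m1.rows ∪ n1.rows = S :=
      union_eq_of_card S _ _ hS (rows_card m1) (rows_card n1)
        (Finset.union_subset hm1 hn1) hd1r
    have hU2 : m2.rows ∪ n2.rows = S :=
      union_eq_of_card S _ _ hS (rows_card m2) (rows_card n2)
        (Finset.union_subset hm2 hn2) hd2r
    apply hker
    rw [map_sub, map_add, map_add, phi_sdet_A2 K d m1 h1, phi_sdet_A2 K d n1 h2,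
      phi_sdet_A2 K d m2 h3, phi_sdet_A2 K d n2 h4]
    have e1 : (∑ i ∈ m1.rows, X i ^ 2) + (∑ i ∈ n1.rows, X i ^ 2)
        = ∑ i ∈ S, (X i : MvPolynomial (Idx d) K) ^ 2 := by
      rw [← Finset.sum_union hd1r, hU1]
    have e2 : (∑ i ∈ m2.rows, X i ^ 2) + (∑ i ∈ n2.rows, X i ^ 2)
        = ∑ i ∈ S, (X i : MvPolynomial (Idx d) K) ^ 2 := by
      rw [← Finset.sum_union hd2r, hU2]
    linear_combination (xd K d ^ 2) * e2 - (xd K d ^ 2) * e1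
end

section
/- Every monomial in K₀ = {w_{ik}w_{jl}, w_{il}w_{jk} : i < j < k < l} is the ω-leading term of an element of Λ₀, so K₀ ⊆ in(Λ₀); moreover HF_{Λ₀}(2) ≥ |K₀| = 2·C(d,4). -/
open MvPolynomial

/-! ### The monomial order `ω` and initial ideals -/

/-- The order `ω` on the variables: `w_{ij} <_ω w_{kl}` iff `max{i,j} < max{k,l}`, or the
maxima agree and `min{i,j} < min{k,l}`. (Variables are stored with `i ≤ j`.) -/
def varLT {d : ℕ} (p q : SymIdx d) : Prop :=
  p.1.2.1 < q.1.2.1 ∨ (p.1.2.1 = q.1.2.1 ∧ p.1.1.1 < q.1.1.1)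

/-- `p ≤_ω q` on variables. -/
def varLE {d : ℕ} (p q : SymIdx d) : Prop := varLT p q ∨ p = q

/-- Total degree of a monomial exponent. -/
def mdeg {d : ℕ} (μ : SymIdx d →₀ ℕ) : ℕ := μ.sum fun _ e => e

/-- The graded reverse lexicographic order on monomials induced by the variable order `ω`:
`μ <_ω ν` iff `deg μ < deg ν`, or the degrees agree and at the `ω`-smallest variable where
`μ` and `ν` differ, `μ` has the strictly larger exponent. -/
def grevlexLT {d : ℕ} (μ ν : SymIdx d →₀ ℕ) : Prop :=
  mdeg μ < mdeg ν ∨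
    (mdeg μ = mdeg ν ∧ ∃ p : SymIdx d, ν p < μ p ∧ ∀ q : SymIdx d, varLT q p → μ q = ν q)

/-- `μ` is the `ω`-leading monomial of `F`. -/
def IsLeadMon {d : ℕ} {K : Type*} [Field K] (F : MvPolynomial (SymIdx d) K)
    (μ : SymIdx d →₀ ℕ) : Prop :=
  μ ∈ F.support ∧ ∀ ν ∈ F.support, ν ≠ μ → grevlexLT ν μ

/-- The exponent of the monomial `w_{ij}` (equal to `0`, i.e. the monomial `1`, in the
degenerate case `(i,j) = (d,d)` where `w_{dd} = 0`; this case is avoided below). -/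
noncomputable def wexp (d : ℕ) (i j : Idx d) : SymIdx d →₀ ℕ :=
  if h : (min i j).1 = d ∧ (max i j).1 = d then 0
  else Finsupp.single (⟨(min i j, max i j), ⟨min_le_max, h⟩⟩ : SymIdx d) 1

open Classical in
/-- The `ω`-larger of two monomials. -/
noncomputable def grevlexMax {d : ℕ} (μ ν : SymIdx d →₀ ℕ) : SymIdx d →₀ ℕ :=
  if grevlexLT μ ν then ν else μ

/-- The initial ideal of `N` with respect to `ω`: the ideal generated by the leading
monomials of the elements of `N`. -/
noncomputable def inIdeal (K : Type*) [Field K] (d : ℕ)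
    (N : Ideal (MvPolynomial (SymIdx d) K)) : Ideal (MvPolynomial (SymIdx d) K) :=
  Ideal.span {g | ∃ F ∈ N, ∃ μ : SymIdx d →₀ ℕ, IsLeadMon F μ ∧ g = monomial μ (1 : K)}

/-- `K₀ = {w_{ik} w_{jl}, w_{il} w_{jk} : i < j < k < l}`. -/
def K0set (d : ℕ) : Set (SymIdx d →₀ ℕ) :=
  {μ | ∃ i j k l : Idx d, i < j ∧ j < k ∧ k < l ∧
    (μ = wexp d i k + wexp d j l ∨ μ = wexp d i l + wexp d j k)}

/-- `K₁ = {max_ω {w_{jl} w_{il}, w_{ij} w_{ll}} : i ≠ j, l > min({1,…,d} ∖ {i,j})}`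
(when `l = d` the candidate `w_{ij} w_{ll}` degenerates since `w_{dd} = 0`, and the
maximum is `w_{il} w_{jl}`). -/
def K1set (d : ℕ) : Set (SymIdx d →₀ ℕ) :=
  {μ | ∃ i j l : Idx d, i ≠ j ∧ (∃ k : Idx d, k ≠ i ∧ k ≠ j ∧ k < l) ∧
    ((l.1 = d ∧ μ = wexp d i l + wexp d j l) ∨
     (l.1 ≠ d ∧ μ = grevlexMax (wexp d i l + wexp d j l) (wexp d i j + wexp d l l)))}

/-- `K₂ = {w_{ij}² : i ≥ 2, j ≥ 4, i ≠ j}`. -/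
def K2set (d : ℕ) : Set (SymIdx d →₀ ℕ) :=
  {μ | ∃ i j : Idx d, 2 ≤ i.1 ∧ 4 ≤ j.1 ∧ i ≠ j ∧ μ = wexp d i j + wexp d i j}

section K0Aux
open Finsupp

variable {d : ℕ}

/-- The variable `w_{ij}` for `i < j`. -/
def mkVar (i j : Idx d) (h : i < j) : SymIdx d :=
  ⟨(i, j), le_of_lt h, by
    rintro ⟨h1, h2⟩
    have hij : i.1 < j.1 := h
    have h1' : i.1 = d := h1
    have h2' : j.1 = d := h2
    omega⟩

lemma mkVar_inj {i j k l : Idx d} {h : i < j} {h' : k < l}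
    (he : mkVar i j h = mkVar k l h') : i = k ∧ j = l := by
  have h1 := congrArg (fun v : SymIdx d => v.1.1) he
  have h2 := congrArg (fun v : SymIdx d => v.1.2) he
  exact ⟨h1, h2⟩

lemma mkVar_ne {i j k l : Idx d} {h : i < j} {h' : k < l}
    (hne : i ≠ k ∨ j ≠ l) : mkVar i j h ≠ mkVar k l h' := by
  intro he
  obtain ⟨e1, e2⟩ := mkVar_inj he
  tauto

lemma wv_eq {K : Type*} [Field K] {i j : Idx d} (h : i < j) :
    wv K d i j = X (mkVar i j h) := by
  have h1 : min i j = i := min_eq_left h.le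
  have h2 : max i j = j := max_eq_right h.le
  have hc : ¬((min i j).1 = d ∧ (max i j).1 = d) := by
    rw [h1, h2]
    rintro ⟨e1, e2⟩
    have hij : i.1 < j.1 := h
    omega
  rw [wv, dif_neg hc]
  congr 1
  exact Subtype.ext (by rw [Prod.ext_iff]; exact ⟨h1, h2⟩)

lemma wv_eq' {K : Type*} [Field K] {i j : Idx d} (h : j < i) :
    wv K d i j = X (mkVar j i h) := by
  have h1 : min i j = j := min_eq_right h.le
  have h2 : max i j = i := max_eq_left h.le
  have hc : ¬((min i j).1 = d ∧ (max i j).1 = d) := by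
    rw [h1, h2]
    rintro ⟨e1, e2⟩
    have hij : j.1 < i.1 := h
    omega
  rw [wv, dif_neg hc]
  congr 1
  exact Subtype.ext (by rw [Prod.ext_iff]; exact ⟨h1, h2⟩)

lemma wexp_eq {i j : Idx d} (h : i < j) :
    wexp d i j = Finsupp.single (mkVar i j h) 1 := by
  have h1 : min i j = i := min_eq_left h.le
  have h2 : max i j = j := max_eq_right h.le
  have hc : ¬((min i j).1 = d ∧ (max i j).1 = d) := by
    rw [h1, h2]
    rintro ⟨e1, e2⟩
    have hij : i.1 < j.1 := h
    omega
  rw [wexp, dif_neg hc]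
  congr 1
  exact Subtype.ext (by rw [Prod.ext_iff]; exact ⟨h1, h2⟩)

lemma XmulX {K : Type*} [Field K] (p q : SymIdx d) :
    (X p * X q : MvPolynomial (SymIdx d) K) =
      monomial (Finsupp.single p 1 + Finsupp.single q 1) 1 := by
  rw [← pow_one (X p), ← pow_one (X q), X_pow_eq_monomial, X_pow_eq_monomial,
    monomial_mul, one_mul]

lemma pair_apply (a b q : SymIdx d) :
    (Finsupp.single a 1 + Finsupp.single b 1 : SymIdx d →₀ ℕ) q =
      (if a = q then 1 else 0) + (if b = q then 1 else 0) := by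
  simp [Finsupp.single_apply]

lemma pair_eq {a b c e : SymIdx d}
    (h : (Finsupp.single a 1 + Finsupp.single b 1 : SymIdx d →₀ ℕ) =
      Finsupp.single c 1 + Finsupp.single e 1) :
    (a = c ∧ b = e) ∨ (a = e ∧ b = c) := by
  by_cases h1 : a = c
  · subst h1
    have h2 : (Finsupp.single b 1 : SymIdx d →₀ ℕ) = Finsupp.single e 1 :=
      add_left_cancel h
    rcases (Finsupp.single_eq_single_iff _ _ _ _).1 h2 with ⟨hb, _⟩ | ⟨hb, _⟩
    · exact Or.inl ⟨rfl, hb⟩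
    · exact absurd hb one_ne_zero
  · have ha := DFunLike.congr_fun h a
    rw [pair_apply, pair_apply, if_pos rfl, if_neg (Ne.symm h1)] at ha
    have hea : e = a := by
      by_contra hea
      rw [if_neg hea] at ha
      omega
    subst hea
    rw [add_comm (Finsupp.single c 1)] at h
    have h2 : (Finsupp.single b 1 : SymIdx d →₀ ℕ) = Finsupp.single c 1 :=
      add_left_cancel h
    rcases (Finsupp.single_eq_single_iff _ _ _ _).1 h2 with ⟨hb, _⟩ | ⟨hb, _⟩
    · exact Or.inr ⟨rfl, hb⟩
    · exact absurd hb one_ne_zero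

lemma pair_ne {a b c e : SymIdx d} (h1 : ¬(a = c ∧ b = e)) (h2 : ¬(a = e ∧ b = c)) :
    (Finsupp.single a 1 + Finsupp.single b 1 : SymIdx d →₀ ℕ) ≠
      Finsupp.single c 1 + Finsupp.single e 1 := by
  intro h
  rcases pair_eq h with h' | h' <;> tauto

lemma mdeg_pair (a b : SymIdx d) :
    mdeg (Finsupp.single a 1 + Finsupp.single b 1) = 2 := by
  rw [mdeg, Finsupp.sum_add_index (by simp) (by simp),
    Finsupp.sum_single_index rfl, Finsupp.sum_single_index rfl]

lemma not_varLT_self (a : SymIdx d) : ¬ varLT a a := by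
  simp [varLT]

lemma glt_of {a b c e : SymIdx d} (hac : a ≠ c) (hae : a ≠ e)
    (h3 : ¬ varLT b a) (h4 : ¬ varLT c a) (h5 : ¬ varLT e a) :
    grevlexLT (Finsupp.single a 1 + Finsupp.single b 1)
      (Finsupp.single c 1 + Finsupp.single e 1) := by
  refine Or.inr ⟨by rw [mdeg_pair, mdeg_pair], a, ?_, ?_⟩
  · rw [pair_apply, pair_apply, if_pos rfl, if_neg (Ne.symm hac), if_neg (Ne.symm hae)]
    split_ifs <;> omega
  · intro q hq
    have hqa : a ≠ q := by rintro rfl; exact not_varLT_self a hq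
    have hqb : b ≠ q := by rintro rfl; exact h3 hq
    have hqc : c ≠ q := by rintro rfl; exact h4 hq
    have hqe : e ≠ q := by rintro rfl; exact h5 hq
    rw [pair_apply, pair_apply, if_neg hqa, if_neg hqb, if_neg hqc, if_neg hqe]

lemma support_pair_sub {K : Type*} [Field K] {μ ν : SymIdx d →₀ ℕ} (h : μ ≠ ν) :
    (monomial μ (1 : K) - monomial ν 1).support = {μ, ν} := by
  ext t
  simp only [MvPolynomial.mem_support_iff, coeff_sub, coeff_monomial,
    Finset.mem_insert, Finset.mem_singleton]
  by_cases h1 : μ = t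
  · subst h1
    rw [if_pos rfl, if_neg (fun hh : ν = μ => h hh.symm)]
    simp
  · rw [if_neg h1]
    by_cases h2 : ν = t
    · subst h2
      rw [if_pos rfl]
      simp
    · rw [if_neg h2]
      constructor
      · intro hh
        simp at hh
      · rintro (rfl | rfl)
        · exact absurd rfl h1
        · exact absurd rfl h2

lemma isLeadMon_pair {K : Type*} [Field K] {μs μl : SymIdx d →₀ ℕ}
    (hne : μs ≠ μl) (hlt : grevlexLT μs μl) :
    IsLeadMon (monomial μs (1 : K) - monomial μl 1) μl := by
  constructor
  · rw [support_pair_sub hne]; simp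
  · intro ν hν hν'
    rw [support_pair_sub hne, Finset.mem_insert, Finset.mem_singleton] at hν
    rcases hν with rfl | rfl
    · exact hlt
    · exact absurd rfl hν'

lemma not_varLT_mkVar {a b c e : Idx d} {h : a < b} {h' : c < e}
    (hh : e.1 < b.1 ∨ (e.1 = b.1 ∧ c.1 ≤ a.1)) :
    ¬ varLT (mkVar a b h) (mkVar c e h') := by
  intro hv
  have hv' : b.1 < e.1 ∨ (b.1 = e.1 ∧ a.1 < c.1) := hv
  rcases hv' with h1 | ⟨h1, h2⟩ <;> omega

section Quad
variable {K : Type*} [Field K]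
variable {i j k l : Idx d}

/-- The minor with rows `{i,j}` and columns `{k,l}`; its `sdet` is `Q - R`. -/
def minorQR (hij : i < j) (hjk : j < k) (hkl : k < l) : Sub2 d :=
  ⟨i, j, k, l, hij, hkl⟩

/-- The minor with rows `{i,l}` and columns `{j,k}`; its `sdet` is `P - Q`. -/
def minorPQ (hij : i < j) (hjk : j < k) (hkl : k < l) : Sub2 d :=
  ⟨i, l, j, k, hij.trans (hjk.trans hkl), hjk⟩

lemma sdet_QR (hij : i < j) (hjk : j < k) (hkl : k < l) :
    sdet K d (minorQR hij hjk hkl) =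
      monomial (Finsupp.single (mkVar i k (hij.trans hjk)) 1 +
        Finsupp.single (mkVar j l (hjk.trans hkl)) 1) 1 -
      monomial (Finsupp.single (mkVar i l (hij.trans (hjk.trans hkl))) 1 +
        Finsupp.single (mkVar j k hjk) 1) 1 := by
  simp only [sdet, minorQR]
  rw [wv_eq (hij.trans hjk), wv_eq (hjk.trans hkl), wv_eq (hij.trans (hjk.trans hkl)),
    wv_eq hjk, XmulX, XmulX]

lemma sdet_PQ (hij : i < j) (hjk : j < k) (hkl : k < l) :
    sdet K d (minorPQ hij hjk hkl) =
      monomial (Finsupp.single (mkVar i j hij) 1 + Finsupp.single (mkVar k l hkl) 1) 1 -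
      monomial (Finsupp.single (mkVar i k (hij.trans hjk)) 1 +
        Finsupp.single (mkVar j l (hjk.trans hkl)) 1) 1 := by
  simp only [sdet, minorPQ]
  rw [wv_eq hij, wv_eq' hkl, wv_eq (hij.trans hjk), wv_eq' (hjk.trans hkl), XmulX, XmulX]

lemma inA0_QR (hij : i < j) (hjk : j < k) (hkl : k < l) :
    inA 0 (minorQR hij hjk hkl) := by
  have he : (minorQR hij hjk hkl).rows ∩ (minorQR hij hjk hkl).cols = ∅ := by
    ext x
    simp only [minorQR, Sub2.rows, Sub2.cols, Finset.mem_inter, Finset.mem_insert,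
      Finset.mem_singleton, Finset.notMem_empty, iff_false, not_and]
    rintro (h1 | h1) (h2 | h2)
    all_goals {
      have hij' : i.1 < j.1 := hij
      have hjk' : j.1 < k.1 := hjk
      have hkl' : k.1 < l.1 := hkl
      have h1' := congrArg Subtype.val h1
      have h2' := congrArg Subtype.val h2
      omega }
  simp [inA, he]

lemma inA0_PQ (hij : i < j) (hjk : j < k) (hkl : k < l) :
    inA 0 (minorPQ hij hjk hkl) := by
  have he : (minorPQ hij hjk hkl).rows ∩ (minorPQ hij hjk hkl).cols = ∅ := by
    ext x
    simp only [minorPQ, Sub2.rows, Sub2.cols, Finset.mem_inter, Finset.mem_insert,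
      Finset.mem_singleton, Finset.notMem_empty, iff_false, not_and]
    rintro (h1 | h1) (h2 | h2)
    all_goals {
      have hij' : i.1 < j.1 := hij
      have hjk' : j.1 < k.1 := hjk
      have hkl' : k.1 < l.1 := hkl
      have h1' := congrArg Subtype.val h1
      have h2' := congrArg Subtype.val h2
      omega }
  simp [inA, he]

lemma lead_QR (hij : i < j) (hjk : j < k) (hkl : k < l) :
    IsLeadMon (sdet K d (minorQR hij hjk hkl)) (wexp d i l + wexp d j k) := by
  have hij' : i.1 < j.1 := hij
  have hjk' : j.1 < k.1 := hjk
  have hkl' : k.1 < l.1 := hkl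
  rw [sdet_QR hij hjk hkl, wexp_eq (hij.trans (hjk.trans hkl)), wexp_eq hjk]
  apply isLeadMon_pair
  · exact pair_ne
      (fun hh => absurd (mkVar_inj hh.1).2 (ne_of_lt hkl))
      (fun hh => absurd (mkVar_inj hh.1).1 (ne_of_lt hij))
  · exact glt_of
      (mkVar_ne (Or.inr (ne_of_lt hkl)))
      (mkVar_ne (Or.inl (ne_of_lt hij)))
      (not_varLT_mkVar (Or.inl (by omega)))
      (not_varLT_mkVar (Or.inl (by omega)))
      (not_varLT_mkVar (Or.inr ⟨rfl, by omega⟩))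

lemma lead_PQ (hij : i < j) (hjk : j < k) (hkl : k < l) :
    IsLeadMon (sdet K d (minorPQ hij hjk hkl)) (wexp d i k + wexp d j l) := by
  have hij' : i.1 < j.1 := hij
  have hjk' : j.1 < k.1 := hjk
  have hkl' : k.1 < l.1 := hkl
  rw [sdet_PQ hij hjk hkl, wexp_eq (hij.trans hjk), wexp_eq (hjk.trans hkl)]
  apply isLeadMon_pair
  · exact pair_ne
      (fun hh => absurd (mkVar_inj hh.1).2 (ne_of_lt hjk))
      (fun hh => absurd (mkVar_inj hh.1).1 (ne_of_lt hij))
  · exact glt_of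
      (mkVar_ne (Or.inr (ne_of_lt hjk)))
      (mkVar_ne (Or.inl (ne_of_lt hij)))
      (not_varLT_mkVar (Or.inl (by omega)))
      (not_varLT_mkVar (Or.inl (by omega)))
      (not_varLT_mkVar (Or.inl (by omega)))

lemma sdet_QR_mem (hij : i < j) (hjk : j < k) (hkl : k < l) :
    sdet K d (minorQR hij hjk hkl) ∈ Lam0 K d :=
  Ideal.subset_span ⟨minorQR hij hjk hkl, inA0_QR hij hjk hkl, rfl⟩

lemma sdet_PQ_mem (hij : i < j) (hjk : j < k) (hkl : k < l) :
    sdet K d (minorPQ hij hjk hkl) ∈ Lam0 K d :=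
  Ideal.subset_span ⟨minorPQ hij hjk hkl, inA0_PQ hij hjk hkl, rfl⟩

end Quad

lemma part1 {K : Type*} [Field K] :
    ∀ μ ∈ K0set d, ∃ F ∈ Lam0 K d, IsLeadMon F μ := by
  rintro μ ⟨i, j, k, l, hij, hjk, hkl, hμ | hμ⟩
  · exact ⟨sdet K d (minorPQ hij hjk hkl), sdet_PQ_mem hij hjk hkl,
      hμ ▸ lead_PQ hij hjk hkl⟩
  · exact ⟨sdet K d (minorQR hij hjk hkl), sdet_QR_mem hij hjk hkl,
      hμ ▸ lead_QR hij hjk hkl⟩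

section Count

/-- 4-element subsets of `{1,…,d}`. -/
abbrev S4 (d : ℕ) := {s : Finset (Idx d) // s.card = 4}

/-- The increasing enumeration of a 4-element subset. -/
noncomputable def tup (σ : S4 d) : Fin 4 → Idx d := σ.1.orderEmbOfFin σ.2

lemma tup_mono (σ : S4 d) {a b : Fin 4} (h : a < b) : tup σ a < tup σ b :=
  (σ.1.orderEmbOfFin σ.2).strictMono h

lemma mem_S4_iff (σ : S4 d) (x : Idx d) : x ∈ σ.1 ↔ ∃ a : Fin 4, tup σ a = x := by
  have hr := Finset.range_orderEmbOfFin σ.1 σ.2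
  constructor
  · intro hx
    have : x ∈ Set.range (σ.1.orderEmbOfFin σ.2) := hr ▸ (Finset.mem_coe.2 hx)
    exact this
  · rintro ⟨a, rfl⟩
    exact Finset.orderEmbOfFin_mem _ _ _

lemma S4_ext {σ σ' : S4 d} (h : ∀ a, tup σ a = tup σ' a) : σ = σ' := by
  apply Subtype.ext
  apply Finset.ext
  intro x
  rw [mem_S4_iff, mem_S4_iff]
  constructor
  · rintro ⟨a, ha⟩; exact ⟨a, by rw [← h a, ha]⟩
  · rintro ⟨a, ha⟩; exact ⟨a, by rw [h a, ha]⟩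

/-- The leading monomial attached to the index `β`. -/
noncomputable def lmB (β : S4 d × Bool) : SymIdx d →₀ ℕ :=
  if β.2 then wexp d (tup β.1 0) (tup β.1 3) + wexp d (tup β.1 1) (tup β.1 2)
  else wexp d (tup β.1 0) (tup β.1 2) + wexp d (tup β.1 1) (tup β.1 3)

/-- The trailing monomial attached to the index `β`. -/
noncomputable def smB (β : S4 d × Bool) : SymIdx d →₀ ℕ :=
  if β.2 then wexp d (tup β.1 0) (tup β.1 2) + wexp d (tup β.1 1) (tup β.1 3)
  else wexp d (tup β.1 0) (tup β.1 1) + wexp d (tup β.1 2) (tup β.1 3)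

lemma lmB_true (σ : S4 d) : lmB (σ, true) =
    Finsupp.single (mkVar (tup σ 0) (tup σ 3) (tup_mono σ (by decide))) 1 +
    Finsupp.single (mkVar (tup σ 1) (tup σ 2) (tup_mono σ (by decide))) 1 := by
  rw [lmB, if_pos rfl, wexp_eq (tup_mono σ (show (0:Fin 4) < 3 by decide)),
    wexp_eq (tup_mono σ (show (1:Fin 4) < 2 by decide))]

lemma lmB_false (σ : S4 d) : lmB (σ, false) =
    Finsupp.single (mkVar (tup σ 0) (tup σ 2) (tup_mono σ (by decide))) 1 +
    Finsupp.single (mkVar (tup σ 1) (tup σ 3) (tup_mono σ (by decide))) 1 := by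
  rw [lmB, if_neg (by simp), wexp_eq (tup_mono σ (show (0:Fin 4) < 2 by decide)),
    wexp_eq (tup_mono σ (show (1:Fin 4) < 3 by decide))]

lemma smB_true (σ : S4 d) : smB (σ, true) =
    Finsupp.single (mkVar (tup σ 0) (tup σ 2) (tup_mono σ (by decide))) 1 +
    Finsupp.single (mkVar (tup σ 1) (tup σ 3) (tup_mono σ (by decide))) 1 := by
  rw [smB, if_pos rfl, wexp_eq (tup_mono σ (show (0:Fin 4) < 2 by decide)),
    wexp_eq (tup_mono σ (show (1:Fin 4) < 3 by decide))]

lemma smB_false (σ : S4 d) : smB (σ, false) =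
    Finsupp.single (mkVar (tup σ 0) (tup σ 1) (tup_mono σ (by decide))) 1 +
    Finsupp.single (mkVar (tup σ 2) (tup σ 3) (tup_mono σ (by decide))) 1 := by
  rw [smB, if_neg (by simp), wexp_eq (tup_mono σ (show (0:Fin 4) < 1 by decide)),
    wexp_eq (tup_mono σ (show (2:Fin 4) < 3 by decide))]

lemma lmB_inj : Function.Injective (lmB (d := d)) := by
  rintro ⟨σ, b⟩ ⟨σ', b'⟩ h
  have o1 : (tup σ 0).1 < (tup σ 1).1 := tup_mono σ (by decide)
  have o2 : (tup σ 1).1 < (tup σ 2).1 := tup_mono σ (by decide)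
  have o3 : (tup σ 2).1 < (tup σ 3).1 := tup_mono σ (by decide)
  have p1 : (tup σ' 0).1 < (tup σ' 1).1 := tup_mono σ' (by decide)
  have p2 : (tup σ' 1).1 < (tup σ' 2).1 := tup_mono σ' (by decide)
  have p3 : (tup σ' 2).1 < (tup σ' 3).1 := tup_mono σ' (by decide)
  cases b <;> cases b'
  · rw [lmB_false σ, lmB_false σ'] at h
    rcases pair_eq h with ⟨e1, e2⟩ | ⟨e1, e2⟩
    ·
      obtain ⟨a1, a2⟩ := mkVar_inj e1
      obtain ⟨a3, a4⟩ := mkVar_inj e2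
      have hσ : σ = σ' := S4_ext (by intro a; fin_cases a; exacts [a1, a3, a2, a4])
      rw [hσ]
    ·
      obtain ⟨a1, a2⟩ := mkVar_inj e1
      obtain ⟨a3, a4⟩ := mkVar_inj e2
      exfalso
      have n1 := congrArg Subtype.val a1
      have n2 := congrArg Subtype.val a2
      have n3 := congrArg Subtype.val a3
      have n4 := congrArg Subtype.val a4
      omega
  · rw [lmB_false σ, lmB_true σ'] at h
    rcases pair_eq h with ⟨e1, e2⟩ | ⟨e1, e2⟩
    ·
      obtain ⟨a1, a2⟩ := mkVar_inj e1
      obtain ⟨a3, a4⟩ := mkVar_inj e2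
      exfalso
      have n1 := congrArg Subtype.val a1
      have n2 := congrArg Subtype.val a2
      have n3 := congrArg Subtype.val a3
      have n4 := congrArg Subtype.val a4
      omega
    ·
      obtain ⟨a1, a2⟩ := mkVar_inj e1
      obtain ⟨a3, a4⟩ := mkVar_inj e2
      exfalso
      have n1 := congrArg Subtype.val a1
      have n2 := congrArg Subtype.val a2
      have n3 := congrArg Subtype.val a3
      have n4 := congrArg Subtype.val a4
      omega
  · rw [lmB_true σ, lmB_false σ'] at h
    rcases pair_eq h with ⟨e1, e2⟩ | ⟨e1, e2⟩
    ·
      obtain ⟨a1, a2⟩ := mkVar_inj e1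
      obtain ⟨a3, a4⟩ := mkVar_inj e2
      exfalso
      have n1 := congrArg Subtype.val a1
      have n2 := congrArg Subtype.val a2
      have n3 := congrArg Subtype.val a3
      have n4 := congrArg Subtype.val a4
      omega
    ·
      obtain ⟨a1, a2⟩ := mkVar_inj e1
      obtain ⟨a3, a4⟩ := mkVar_inj e2
      exfalso
      have n1 := congrArg Subtype.val a1
      have n2 := congrArg Subtype.val a2
      have n3 := congrArg Subtype.val a3
      have n4 := congrArg Subtype.val a4
      omega
  · rw [lmB_true σ, lmB_true σ'] at h
    rcases pair_eq h with ⟨e1, e2⟩ | ⟨e1, e2⟩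
    ·
      obtain ⟨a1, a2⟩ := mkVar_inj e1
      obtain ⟨a3, a4⟩ := mkVar_inj e2
      have hσ : σ = σ' := S4_ext (by intro a; fin_cases a; exacts [a1, a3, a4, a2])
      rw [hσ]
    ·
      obtain ⟨a1, a2⟩ := mkVar_inj e1
      obtain ⟨a3, a4⟩ := mkVar_inj e2
      exfalso
      have n1 := congrArg Subtype.val a1
      have n2 := congrArg Subtype.val a2
      have n3 := congrArg Subtype.val a3
      have n4 := congrArg Subtype.val a4
      omega

lemma K0set_eq_image : K0set d = ↑(Finset.image (lmB (d := d)) Finset.univ) := by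
  classical
  ext μ
  simp only [Finset.coe_image, Set.mem_image, Finset.mem_coe, Finset.mem_univ, true_and,
    Set.mem_setOf_eq, K0set]
  constructor
  · rintro ⟨i, j, k, l, hij, hjk, hkl, hμ⟩
    · have hij' : i.1 < j.1 := hij
      have hjk' : j.1 < k.1 := hjk
      have hkl' : k.1 < l.1 := hkl
      have hne : ∀ x y : Idx d, x.1 ≠ y.1 → x ≠ y :=
        fun x y hxy he => hxy (congrArg Subtype.val he)
      have h1 : i ∉ ({j, k, l} : Finset (Idx d)) := by
        simp only [Finset.mem_insert, Finset.mem_singleton]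
        push_neg
        exact ⟨hne _ _ (by omega), hne _ _ (by omega), hne _ _ (by omega)⟩
      have h2 : j ∉ ({k, l} : Finset (Idx d)) := by
        simp only [Finset.mem_insert, Finset.mem_singleton]
        push_neg
        exact ⟨hne _ _ (by omega), hne _ _ (by omega)⟩
      have h3 : k ∉ ({l} : Finset (Idx d)) := by
        simp only [Finset.mem_singleton]
        exact hne _ _ (by omega)
      have hcard : ({i, j, k, l} : Finset (Idx d)).card = 4 := by
        rw [Finset.card_insert_of_notMem h1, Finset.card_insert_of_notMem h2,
          Finset.card_insert_of_notMem h3, Finset.card_singleton]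
      set σ : S4 d := ⟨{i, j, k, l}, hcard⟩ with hσ
      have hmono : StrictMono ![i, j, k, l] := by
        intro a b hab
        fin_cases a <;> fin_cases b <;>
          first
          | exact absurd hab (by decide)
          | simpa using hij
          | simpa using hjk
          | simpa using hkl
          | simpa using hij.trans hjk
          | simpa using hjk.trans hkl
          | simpa using (hij.trans hjk).trans hkl
      have hfs : ∀ x, ![i, j, k, l] x ∈ ({i, j, k, l} : Finset (Idx d)) := by
        intro x
        fin_cases x <;> simp
      have huniq : ![i, j, k, l] = σ.1.orderEmbOfFin σ.2 :=
        Finset.orderEmbOfFin_unique σ.2 hfs hmono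
      have ht0 : tup σ 0 = i := by rw [tup, ← huniq]; rfl
      have ht1 : tup σ 1 = j := by rw [tup, ← huniq]; rfl
      have ht2 : tup σ 2 = k := by rw [tup, ← huniq]; rfl
      have ht3 : tup σ 3 = l := by rw [tup, ← huniq]; rfl
      rcases hμ with hμ | hμ
      · exact ⟨(σ, false), by rw [lmB, if_neg (by simp), ht0, ht1, ht2, ht3, hμ]⟩
      · exact ⟨(σ, true), by rw [lmB, if_pos rfl, ht0, ht1, ht2, ht3, hμ]⟩
  · rintro ⟨⟨σ, b⟩, rfl⟩
    cases b
    · exact ⟨tup σ 0, tup σ 1, tup σ 2, tup σ 3, tup_mono σ (by decide),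
        tup_mono σ (by decide), tup_mono σ (by decide), Or.inl (by rw [lmB, if_neg (by simp)])⟩
    · exact ⟨tup σ 0, tup σ 1, tup σ 2, tup σ 3, tup_mono σ (by decide),
        tup_mono σ (by decide), tup_mono σ (by decide), Or.inr (by rw [lmB, if_pos rfl])⟩

lemma part2 (hd : 4 ≤ d) : (K0set d).ncard = 2 * Nat.choose d 4 := by
  classical
  rw [K0set_eq_image, Set.ncard_coe_finset,
    Finset.card_image_of_injective _ lmB_inj, Finset.card_univ]
  have hIdx : Fintype.card (Idx d) = d := by simp
  rw [Fintype.card_prod, Fintype.card_bool, Fintype.card_finset_len, hIdx]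
  omega

end Count

section Part3
variable {K : Type*} [Field K]

/-- The element of `Λ₀` attached to the index `β`. -/
noncomputable def FamB (K : Type*) [Field K] {d : ℕ} (β : S4 d × Bool) :
    MvPolynomial (SymIdx d) K :=
  if β.2 then
    sdet K d (minorQR (tup_mono β.1 (show (0:Fin 4) < 1 by decide))
      (tup_mono β.1 (show (1:Fin 4) < 2 by decide))
      (tup_mono β.1 (show (2:Fin 4) < 3 by decide)))
  else
    sdet K d (minorPQ (tup_mono β.1 (show (0:Fin 4) < 1 by decide))
      (tup_mono β.1 (show (1:Fin 4) < 2 by decide))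
      (tup_mono β.1 (show (2:Fin 4) < 3 by decide)))

lemma FamB_eq (β : S4 d × Bool) :
    FamB K β = monomial (smB β) 1 - monomial (lmB β) 1 := by
  obtain ⟨σ, b⟩ := β
  cases b
  · rw [FamB, if_neg (by simp), sdet_PQ, smB_false, lmB_false]
  · rw [FamB, if_pos rfl, sdet_QR, smB_true, lmB_true]

lemma FamB_mem (β : S4 d × Bool) : FamB K β ∈ Lam0 K d := by
  obtain ⟨σ, b⟩ := β
  cases b
  · rw [FamB, if_neg (by simp)]; exact sdet_PQ_mem _ _ _
  · rw [FamB, if_pos rfl]; exact sdet_QR_mem _ _ _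

lemma degree_pair (a b : SymIdx d) :
    (Finsupp.single a 1 + Finsupp.single b 1 : SymIdx d →₀ ℕ).degree = 2 := by
  rw [Finsupp.degree]
  exact mdeg_pair a b

lemma smB_deg (β : S4 d × Bool) : (smB β).degree = 2 := by
  obtain ⟨σ, b⟩ := β
  cases b
  · rw [smB_false]; exact degree_pair _ _
  · rw [smB_true]; exact degree_pair _ _

lemma lmB_deg (β : S4 d × Bool) : (lmB β).degree = 2 := by
  obtain ⟨σ, b⟩ := β
  cases b
  · rw [lmB_false]; exact degree_pair _ _
  · rw [lmB_true]; exact degree_pair _ _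

lemma FamB_homog (β : S4 d × Bool) :
    FamB K β ∈ homogeneousSubmodule (SymIdx d) K 2 := by
  rw [mem_homogeneousSubmodule, FamB_eq]
  exact (isHomogeneous_monomial _ (smB_deg β)).sub (isHomogeneous_monomial _ (lmB_deg β))

/-- Rank of a variable, strictly monotone for `ω`. -/
def rk (v : SymIdx d) : ℕ := v.1.2.1 * (d + 1) + v.1.1.1

/-- The maximal variable rank of a monomial. -/
noncomputable def srk (μ : SymIdx d →₀ ℕ) : ℕ := μ.support.sup rk

lemma rk_mkVar {i j : Idx d} (h : i < j) : rk (mkVar i j h) = j.1 * (d + 1) + i.1 := rfl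

lemma srk_pair {a b : SymIdx d} (hab : a ≠ b) :
    srk (Finsupp.single a 1 + Finsupp.single b 1) = rk a ⊔ rk b := by
  classical
  have hdisj : Disjoint (Finsupp.single a (1:ℕ)).support (Finsupp.single b (1:ℕ)).support := by
    rw [Finsupp.support_single_ne_zero _ one_ne_zero,
      Finsupp.support_single_ne_zero _ one_ne_zero]
    simpa using hab
  rw [srk, Finsupp.support_add_eq hdisj, Finsupp.support_single_ne_zero _ one_ne_zero,
    Finsupp.support_single_ne_zero _ one_ne_zero, Finset.sup_union,
    Finset.sup_singleton, Finset.sup_singleton]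

lemma arith1 {x y u v : ℕ} (h : y < v) (hx : x ≤ d) : y * (d + 1) + x < v * (d + 1) + u := by
  nlinarith

lemma srk_lt (β : S4 d × Bool) : srk (lmB β) < srk (smB β) := by
  obtain ⟨σ, b⟩ := β
  have o1 : (tup σ 0).1 < (tup σ 1).1 := tup_mono σ (by decide)
  have o2 : (tup σ 1).1 < (tup σ 2).1 := tup_mono σ (by decide)
  have o3 : (tup σ 2).1 < (tup σ 3).1 := tup_mono σ (by decide)
  have hb0 : (tup σ 0).1 ≤ d := (Set.mem_Icc.1 (tup σ 0).2).2
  have hb1 : (tup σ 1).1 ≤ d := (Set.mem_Icc.1 (tup σ 1).2).2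
  cases b
  · rw [lmB_false, smB_false,
      srk_pair (mkVar_ne (Or.inl (tup_mono σ (show (0:Fin 4) < 1 by decide)).ne)),
      srk_pair (mkVar_ne (Or.inl (tup_mono σ (show (0:Fin 4) < 2 by decide)).ne)),
      rk_mkVar, rk_mkVar, rk_mkVar, rk_mkVar]
    rw [sup_eq_right.2 (le_of_lt (arith1 o3 hb0)),
      sup_eq_right.2 (le_of_lt (arith1 (lt_trans o2 o3) hb0))]
    exact Nat.add_lt_add_left o2 _
  · rw [lmB_true, smB_true,
      srk_pair (mkVar_ne (Or.inl (tup_mono σ (show (0:Fin 4) < 1 by decide)).ne)),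
      srk_pair (mkVar_ne (Or.inl (tup_mono σ (show (0:Fin 4) < 1 by decide)).ne)),
      rk_mkVar, rk_mkVar, rk_mkVar, rk_mkVar]
    rw [sup_eq_left.2 (le_of_lt (arith1 o3 hb1)),
      sup_eq_right.2 (le_of_lt (arith1 o3 hb0))]
    exact Nat.add_lt_add_left o1 _

lemma smB_ne_lmB (β : S4 d × Bool) : smB β ≠ lmB β := by
  intro h
  have := srk_lt β
  rw [h] at this
  exact lt_irrefl _ this

lemma FamB_indep : LinearIndependent K (FamB K (d := d)) := by
  classical
  rw [Fintype.linearIndependent_iff]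
  intro g hg
  by_contra hcon
  push_neg at hcon
  obtain ⟨β₀, hβ₀⟩ := hcon
  set T := Finset.univ.filter (fun β : S4 d × Bool => g β ≠ 0) with hTdef
  obtain ⟨α, hαT, hmin⟩ := T.exists_min_image (fun β => srk (lmB β))
    ⟨β₀, by simp [hTdef, hβ₀]⟩
  have hgα : g α ≠ 0 := (Finset.mem_filter.1 hαT).2
  have h0 := congrArg (MvPolynomial.coeff (lmB α)) hg
  rw [MvPolynomial.coeff_zero, MvPolynomial.coeff_sum] at h0
  simp only [MvPolynomial.coeff_smul, FamB_eq, MvPolynomial.coeff_sub,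
    MvPolynomial.coeff_monomial, smul_eq_mul] at h0
  rw [Finset.sum_eq_single α] at h0
  · rw [if_neg (smB_ne_lmB α), if_pos rfl] at h0
    apply hgα
    have : g α * (0 - 1) = 0 := h0
    simpa using this
  · intro β _ hβα
    by_cases hgβ : g β = 0
    · rw [hgβ, zero_mul]
    · have hβT : β ∈ T := Finset.mem_filter.2 ⟨Finset.mem_univ _, hgβ⟩
      have h1 : lmB β ≠ lmB α := fun hh => hβα (lmB_inj hh)
      have h2 : smB β ≠ lmB α := by
        intro hh
        have hle := hmin β hβT
        have hlt := srk_lt β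
        rw [hh] at hlt
        omega
      rw [if_neg h2, if_neg h1]
      simp
  · intro hα
    exact absurd (Finset.mem_univ α) hα

lemma exp2 {τ : Type*} (ν : τ →₀ ℕ) (h : ν.degree = 2) :
    ∃ p q : τ, ν = Finsupp.single p 1 + Finsupp.single q 1 := by
  classical
  have hs : ν.support.Nonempty := by
    by_contra hne
    rw [Finset.not_nonempty_iff_eq_empty] at hne
    rw [Finsupp.degree_apply, hne, Finset.sum_empty] at h
    omega
  obtain ⟨p, hp⟩ := hs
  rw [Finsupp.degree_apply, ← Finset.add_sum_erase _ _ hp] at h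
  have hp1 : 1 ≤ ν p := Nat.one_le_iff_ne_zero.2 (Finsupp.mem_support_iff.1 hp)
  by_cases h2 : ν p = 2
  · refine ⟨p, p, ?_⟩
    have hsum0 : ∑ x ∈ ν.support.erase p, ν x = 0 := by omega
    have hzero : ∀ x ∈ ν.support.erase p, ν x = 0 := Finset.sum_eq_zero_iff.1 hsum0
    ext x
    simp only [Finsupp.add_apply, Finsupp.single_apply]
    by_cases hxp : p = x
    · rw [if_pos hxp, ← hxp]
      omega
    · rw [if_neg hxp]
      by_cases hxs : x ∈ ν.support
      · have := hzero x (Finset.mem_erase.2 ⟨fun hh => hxp hh.symm, hxs⟩)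
        omega
      · have := Finsupp.notMem_support_iff.1 hxs
        omega
  · have hνp : ν p = 1 := by omega
    have hsum1 : ∑ x ∈ ν.support.erase p, ν x = 1 := by omega
    have hne : (ν.support.erase p).Nonempty := by
      by_contra hne
      rw [Finset.not_nonempty_iff_eq_empty] at hne
      rw [hne, Finset.sum_empty] at hsum1
      omega
    obtain ⟨q, hq⟩ := hne
    have hqp : q ≠ p := (Finset.mem_erase.1 hq).1
    have hq1 : 1 ≤ ν q :=
      Nat.one_le_iff_ne_zero.2 (Finsupp.mem_support_iff.1 (Finset.mem_erase.1 hq).2)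
    have hqle : ν q ≤ 1 := hsum1 ▸ Finset.single_le_sum (fun i _ => Nat.zero_le _) hq
    rw [← Finset.add_sum_erase _ _ hq] at hsum1
    have hrest0 : ∀ x ∈ (ν.support.erase p).erase q, ν x = 0 :=
      Finset.sum_eq_zero_iff.1 (by omega)
    refine ⟨p, q, ?_⟩
    ext x
    simp only [Finsupp.add_apply, Finsupp.single_apply]
    by_cases hxp : p = x
    · rw [if_pos hxp, ← hxp, if_neg (fun hh : q = p => hqp hh)]
      omega
    · rw [if_neg hxp]
      by_cases hxq : q = x
      · rw [if_pos hxq, ← hxq]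
        omega
      · rw [if_neg hxq]
        by_cases hxs : x ∈ ν.support
        · have := hrest0 x (Finset.mem_erase.2 ⟨fun hh => hxq hh.symm,
            Finset.mem_erase.2 ⟨fun hh => hxp hh.symm, hxs⟩⟩)
          omega
        · have := Finsupp.notMem_support_iff.1 hxs
          omega

lemma fd_H2 : FiniteDimensional K ↥(homogeneousSubmodule (SymIdx d) K 2) := by
  classical
  let Φ : ↥(homogeneousSubmodule (SymIdx d) K 2) →ₗ[K] ((SymIdx d × SymIdx d) → K) :=
    { toFun := fun f pq => MvPolynomial.coeff (Finsupp.single pq.1 1 + Finsupp.single pq.2 1) f.1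
      map_add' := fun f g => funext fun pq => by simp
      map_smul' := fun c f => funext fun pq => by simp }
  refine FiniteDimensional.of_injective Φ ?_
  intro f g hfg
  apply Subtype.ext
  apply MvPolynomial.ext
  intro ν
  by_cases hν2 : ν.degree = 2
  · obtain ⟨p, q, rfl⟩ := exp2 ν hν2
    exact congrFun hfg (p, q)
  · have hf : MvPolynomial.coeff ν (f : MvPolynomial (SymIdx d) K) = 0 := by
      by_contra hne
      exact hν2 (by rw [Finsupp.degree_eq_weight_one]; exact f.2 hne)
    have hg : MvPolynomial.coeff ν (g : MvPolynomial (SymIdx d) K) = 0 := by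
      by_contra hne
      exact hν2 (by rw [Finsupp.degree_eq_weight_one]; exact g.2 hne)
    rw [hf, hg]

lemma part3 : 2 * Nat.choose d 4 ≤ HFI K d (Lam0 K d) 2 := by
  classical
  haveI hH2 : FiniteDimensional K ↥(homogeneousSubmodule (SymIdx d) K 2) := fd_H2
  haveI : FiniteDimensional K
      ↥(Submodule.restrictScalars K (Lam0 K d) ⊓ homogeneousSubmodule (SymIdx d) K 2) :=
    Submodule.finiteDimensional_of_le inf_le_right
  let fam : S4 d × Bool →
      ↥(Submodule.restrictScalars K (Lam0 K d) ⊓ homogeneousSubmodule (SymIdx d) K 2) :=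
    fun β => ⟨FamB K β, Submodule.mem_inf.2 ⟨FamB_mem β, FamB_homog β⟩⟩
  have hind : LinearIndependent K fam := by
    apply LinearIndependent.of_comp
      (Submodule.restrictScalars K (Lam0 K d) ⊓ homogeneousSubmodule (SymIdx d) K 2).subtype
    exact FamB_indep
  have hle := hind.fintype_card_le_finrank
  have hcard : Fintype.card (S4 d × Bool) = 2 * Nat.choose d 4 := by
    rw [Fintype.card_prod, Fintype.card_bool, Fintype.card_finset_len]
    have hIdx : Fintype.card (Idx d) = d := by simp
    rw [hIdx]
    ring
  rw [HFI, ← hcard]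
  exact hle

end Part3

end K0Aux

/-- Every monomial in `K₀ = {w_{ik}w_{jl}, w_{il}w_{jk} : i < j < k < l}` is the
`ω`-leading monomial of an element of `Λ₀` (hence `K₀ ⊆ in(Λ₀)`); moreover
`HF_{Λ₀}(2) ≥ |K₀| = 2 · C(d,4)`. -/
theorem K0_subset_initial_Lam0 (K : Type*) [Field K] [CharZero K] (d : ℕ) (hd : 4 ≤ d) :
    (∀ μ ∈ K0set d, ∃ F ∈ Lam0 K d, IsLeadMon F μ) ∧
    (K0set d).ncard = 2 * Nat.choose d 4 ∧
    2 * Nat.choose d 4 ≤ HFI K d (Lam0 K d) 2 := by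
  exact ⟨part1, part2 hd, part3⟩
end
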